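/- With μ(v,T) = α v^β T^γ (γ ≠ −1, 3γ+3β+2q−2 ≠ 0), the function p(r) = (C₂ + C₁^{−β−γ}(1+γ)(1−q) r^{(3γ+3β+2q−2)/(q−1)} / (2αR^β(3γ+3β+2q−2)))^{1/(1+γ)}, with v(r) = R C₁ r^{3/(1−q)} and T(r)=p(r)v(r)/R, satisfies p'(r) = −r/(2μ(v(r),T(r))). -/

import Mathlib

/-- For the medium `μ(v,T) = α v^β T^γ` (`γ ≠ −1`, `3γ+3β+2q−2 ≠ 0`), the function
`p(r) = (C₂ + C₁^{−β−γ}(1+γ)(1−q) r^{(3γ+3β+2q−2)/(q−1)}/(2αR^β(3γ+3β+2q−2)))^{1/(1+γ)}`,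
with `v(r) = R C₁ r^{3/(1−q)}` and `T(r) = p(r)v(r)/R`, satisfies
`p'(r) = −r/(2μ(v(r),T(r)))` on an interval where the base of the power is
positive and `p, T, v > 0`. -/
theorem ideal_gas_solution_case3
    (α R C₁ C₂ q β γ : ℝ) (hα : 0 < α) (hR : 0 < R) (hC₁ : 0 < C₁)
    (hq : q ≠ 1) (hγ : γ ≠ -1) (hβγq : 3 * γ + 3 * β + 2 * q - 2 ≠ 0)
    (p v T : ℝ → ℝ) (μ : ℝ → ℝ → ℝ)
    (hp : ∀ r, p r = (C₂ + C₁ ^ (-β - γ) * (1 + γ) * (1 - q)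
        / (2 * α * R ^ β * (3 * γ + 3 * β + 2 * q - 2))
        * r ^ ((3 * γ + 3 * β + 2 * q - 2) / (q - 1))) ^ (1 / (1 + γ)))
    (hv : ∀ r, v r = R * C₁ * r ^ (3 / (1 - q)))
    (hT : ∀ r, T r = p r * v r / R)
    (hμ : ∀ v' T', μ v' T' = α * v' ^ β * T' ^ γ) :
    ∀ r : ℝ, 0 < r →
      0 < C₂ + C₁ ^ (-β - γ) * (1 + γ) * (1 - q)
          / (2 * α * R ^ β * (3 * γ + 3 * β + 2 * q - 2))
          * r ^ ((3 * γ + 3 * β + 2 * q - 2) / (q - 1)) →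
      0 < p r → 0 < T r → 0 < v r →
      deriv p r = -r / (2 * μ (v r) (T r)) := by
  intro r hr hbase hpr hTr hvr
  have h1γ : (1 : ℝ) + γ ≠ 0 := by
    intro h; apply hγ; linarith
  have hq1 : q - 1 ≠ 0 := sub_ne_zero.mpr hq
  have h1q : (1 : ℝ) - q ≠ 0 := sub_ne_zero.mpr (Ne.symm hq)
  set D : ℝ := 3 * γ + 3 * β + 2 * q - 2 with hD
  set E : ℝ := D / (q - 1) with hE
  set K : ℝ := C₁ ^ (-β - γ) * (1 + γ) * (1 - q) / (2 * α * R ^ β * D) with hK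
  set s : ℝ := 3 / (1 - q) with hs
  set i : ℝ := 1 / (1 + γ) with hi
  set B : ℝ := C₂ + K * r ^ E with hB
  have hBpos : 0 < B := hbase
  -- derivative
  have hdr : HasDerivAt (fun x : ℝ => x ^ E) (E * r ^ (E - 1)) r :=
    Real.hasDerivAt_rpow_const (Or.inl hr.ne')
  have hin : HasDerivAt (fun x : ℝ => C₂ + K * x ^ E) (K * (E * r ^ (E - 1))) r :=
    ((hdr.const_mul K).const_add C₂)
  have hout : HasDerivAt (fun y : ℝ => y ^ i) (i * B ^ (i - 1)) B :=
    Real.hasDerivAt_rpow_const (Or.inl hBpos.ne')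
  have hdp : HasDerivAt p (i * B ^ (i - 1) * (K * (E * r ^ (E - 1)))) r := by
    have := hout.comp r hin
    have hpf : p = fun x : ℝ => (C₂ + K * x ^ E) ^ i := funext hp
    rw [hpf]
    exact this
  rw [hdp.deriv]
  -- μ positivity
  have hμpos : 0 < μ (v r) (T r) := by
    rw [hμ]
    positivity
  rw [eq_div_iff (by positivity)]
  rw [hμ, hT, hv, hp r]
  -- expand powers
  have hvrw : (R * C₁ * r ^ s) ^ β = R ^ β * C₁ ^ β * r ^ (s * β) := by
    rw [Real.mul_rpow (by positivity) (by positivity),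
        Real.mul_rpow hR.le hC₁.le, ← Real.rpow_mul hr.le]
  have hTrw : (B ^ i * (R * C₁ * r ^ s) / R) ^ γ
      = B ^ (i * γ) * C₁ ^ γ * r ^ (s * γ) := by
    have h1 : B ^ i * (R * C₁ * r ^ s) / R = B ^ i * C₁ * r ^ s := by
      field_simp
    rw [h1, Real.mul_rpow (by positivity) (by positivity),
        Real.mul_rpow (by positivity) hC₁.le,
        ← Real.rpow_mul hBpos.le, ← Real.rpow_mul hr.le]
  rw [hvrw, hTrw]
  have key : i * B ^ (i - 1) * (K * (E * r ^ (E - 1))) *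
      (2 * (α * (R ^ β * C₁ ^ β * r ^ (s * β)) *
        (B ^ (i * γ) * C₁ ^ γ * r ^ (s * γ))))
      = (i * K * E * 2 * α * R ^ β) * (C₁ ^ β * C₁ ^ γ) *
        (B ^ (i - 1) * B ^ (i * γ)) * (r ^ (E - 1) * r ^ (s * β) * r ^ (s * γ)) := by
    ring
  rw [key, ← Real.rpow_add hC₁, ← Real.rpow_add hBpos, ← Real.rpow_add hr,
      ← Real.rpow_add hr]
  have e1 : i - 1 + i * γ = 0 := by
    rw [hi]; field_simp; ring
  have e2 : E - 1 + s * β + s * γ = 1 := by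
    rw [hE, hs, hD]; field_simp; ring
  rw [e1, e2, Real.rpow_zero, Real.rpow_one]
  have hCinv : C₁ ^ (-β - γ) = (C₁ ^ (β + γ))⁻¹ := by
    rw [show -β - γ = -(β + γ) by ring, Real.rpow_neg hC₁.le]
  rw [hK, hi, hE, hCinv]
  have hRβ : R ^ β ≠ 0 := (Real.rpow_pos_of_pos hR β).ne'
  have hCβγ : C₁ ^ (β + γ) ≠ 0 := (Real.rpow_pos_of_pos hC₁ (β + γ)).ne'
  field_simp
  ring
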